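/- In 2-dimensional Minkowski spacetime with light-cone coordinates, the Cauchy development of a causally convex, connected, open subset U ⊆ 𝕄 is the double cone D(U) = pr₊(U) × pr₋(U), where pr± : ℝ² → ℝ are the projections onto the light-cone coordinates. Moreover D(U) is itself causally convex, connected and open, and D(D(U)) = D(U). -/

import Mathlib

/-- A (future-directed, inextensible) causal curve in 2d Minkowski spacetime in
light-cone coordinates, parametrized by the time `t = x⁺ + x⁻`: both light-cone
components are nondecreasing and they sum to the parameter. -/
def IsCausalCurve (c : ℝ → ℝ × ℝ) : Prop :=
  Monotone (fun t => (c t).1) ∧ Monotone (fun t => (c t).2) ∧ ∀ t, (c t).1 + (c t).2 = t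

/-- A subset is causally convex if causal curves with endpoints in it stay in it. -/
def CausallyConvex (S : Set (ℝ × ℝ)) : Prop :=
  ∀ c, IsCausalCurve c → ∀ t₀ t₁ t, t₀ ≤ t → t ≤ t₁ → c t₀ ∈ S → c t₁ ∈ S → c t ∈ S

/-- The Cauchy development: points all of whose inextensible causal curves meet `S`. -/
def CauchyDev (S : Set (ℝ × ℝ)) : Set (ℝ × ℝ) :=
  {p | ∀ c, IsCausalCurve c → (∃ t, c t = p) → ∃ t, c t ∈ S}

/-- A clamped causal curve. -/
noncomputable def seg (a b k : ℝ) : ℝ → ℝ × ℝ :=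
  fun t => (max a (min b (t - k)), t - max a (min b (t - k)))

lemma seg_causal (a b k : ℝ) : IsCausalCurve (seg a b k) := by
  refine ⟨?_, ?_, fun t => by simp [seg]⟩
  · intro s t hst
    simp only [seg, max_def, min_def]
    split_ifs <;> linarith
  · intro s t hst
    simp only [seg, max_def, min_def]
    split_ifs <;> linarith

/-- Causal convexity implies box (componentwise order) convexity. -/
lemma box_mem {U : Set (ℝ × ℝ)} (hcc : CausallyConvex U) {q r s : ℝ × ℝ}
    (hq : q ∈ U) (hr : r ∈ U) (h1 : q.1 ≤ s.1) (h2 : s.1 ≤ r.1)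
    (h3 : q.2 ≤ s.2) (h4 : s.2 ≤ r.2) : s ∈ U := by
  have hq' : seg q.1 r.1 s.2 (q.1 + q.2) = q := by
    simp only [seg]
    rw [min_eq_right (by linarith), max_eq_left (by linarith)]
    exact Prod.ext rfl (by ring)
  have hr' : seg q.1 r.1 s.2 (r.1 + r.2) = r := by
    simp only [seg]
    rw [min_eq_left (by linarith), max_eq_right (by linarith)]
    exact Prod.ext rfl (by ring)
  have hs' : seg q.1 r.1 s.2 (s.1 + s.2) = s := by
    simp only [seg]
    rw [show s.1 + s.2 - s.2 = s.1 by ring, min_eq_right h2, max_eq_right h1]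
    exact Prod.ext rfl (by ring)
  have := hcc (seg q.1 r.1 s.2) (seg_causal _ _ _) (q.1 + q.2) (r.1 + r.2) (s.1 + s.2)
    (by linarith) (by linarith) (by rw [hq']; exact hq) (by rw [hr']; exact hr)
  rwa [hs'] at this

lemma causal_fst_continuous {c : ℝ → ℝ × ℝ} (hc : IsCausalCurve c) :
    Continuous fun t => (c t).1 := by
  obtain ⟨h1, h2, h3⟩ := hc
  have : LipschitzWith 1 fun t => (c t).1 := by
    rw [lipschitzWith_iff_dist_le_mul]
    intro s t
    rw [Real.dist_eq, Real.dist_eq, NNReal.coe_one, one_mul]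
    rcases le_total s t with hle | hle
    · have m1 := h1 hle
      have m2 := h2 hle
      have hs := h3 s; have ht := h3 t
      rw [abs_sub_comm s t, abs_of_nonneg (by linarith : (0:ℝ) ≤ t - s)]
      rw [abs_le]
      constructor <;> linarith
    · have m1 := h1 hle
      have m2 := h2 hle
      have hs := h3 s; have ht := h3 t
      rw [abs_of_nonneg (by linarith : (0:ℝ) ≤ s - t)]
      rw [abs_le]
      constructor <;> linarith
  exact this.continuous

/-- Intermediate value argument: if the curve is to the right of `U` at `q`'s time
and to the left at `r`'s time (with `q, r ∈ U` path-connected in `U`), it meets `U`. -/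
lemma ivt_case {U : Set (ℝ × ℝ)} (hU : IsPathConnected U) {c : ℝ → ℝ × ℝ}
    (hc : IsCausalCurve c) {q r : ℝ × ℝ} (hq : q ∈ U) (hr : r ∈ U)
    (hq1 : q.1 ≤ (c (q.1 + q.2)).1) (hr1 : (c (r.1 + r.2)).1 ≤ r.1) :
    ∃ t, c t ∈ U := by
  obtain ⟨γ, hγ⟩ := hU.joinedIn q hq r hr
  set g : ℝ → ℝ := fun u => (c ((γ.extend u).1 + (γ.extend u).2)).1 - (γ.extend u).1 with hg
  have hgc : Continuous g := by
    have h1 : Continuous fun u : ℝ => (γ.extend u).1 + (γ.extend u).2 :=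
      (continuous_fst.comp γ.continuous_extend).add (continuous_snd.comp γ.continuous_extend)
    exact ((causal_fst_continuous hc).comp h1).sub (continuous_fst.comp γ.continuous_extend)
  have hg0 : 0 ≤ g 0 := by simp only [hg, Path.extend_zero]; linarith
  have hg1 : g 1 ≤ 0 := by simp only [hg, Path.extend_one]; linarith
  have : (0:ℝ) ∈ g '' Set.Icc 0 1 :=
    intermediate_value_Icc' (by norm_num) hgc.continuousOn ⟨hg1, hg0⟩
  obtain ⟨u, hu, hgu⟩ := this
  refine ⟨(γ.extend u).1 + (γ.extend u).2, ?_⟩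
  have hfst : (c ((γ.extend u).1 + (γ.extend u).2)).1 = (γ.extend u).1 := by
    have := hgu; simp only [hg] at this; linarith
  have hsum := hc.2.2 ((γ.extend u).1 + (γ.extend u).2)
  have hcu : c ((γ.extend u).1 + (γ.extend u).2) = γ.extend u := by
    refine Prod.ext hfst ?_
    have : (c ((γ.extend u).1 + (γ.extend u).2)).2 =
        ((γ.extend u).1 + (γ.extend u).2) - (c ((γ.extend u).1 + (γ.extend u).2)).1 := by
      linarith
    rw [this, hfst]; ring
  rw [hcu, Path.extend_apply γ hu]
  exact hγ _

/-- The main identification of the Cauchy development as the double cone. -/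
lemma cauchyDev_eq (U : Set (ℝ × ℝ)) (hopen : IsOpen U) (hconn : IsConnected U)
    (hcc : CausallyConvex U) :
    CauchyDev U = (Prod.fst '' U) ×ˢ (Prod.snd '' U) := by
  have hpath : IsPathConnected U := hopen.isConnected_iff_isPathConnected.mp hconn
  ext p
  constructor
  · intro hp
    constructor
    · -- vertical curve (p.1, t - p.1)
      have hc : IsCausalCurve (fun t => (p.1, t - p.1)) :=
        ⟨monotone_const, fun s t hst => by simpa using hst, fun t => by ring⟩
      obtain ⟨t, ht⟩ := hp _ hc ⟨p.1 + p.2, by simp⟩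
      exact ⟨(p.1, t - p.1), ht, rfl⟩
    · -- horizontal curve (t - p.2, p.2)
      have hc : IsCausalCurve (fun t => (t - p.2, p.2)) :=
        ⟨fun s t hst => by simpa using hst, monotone_const, fun t => by ring⟩
      obtain ⟨t, ht⟩ := hp _ hc ⟨p.1 + p.2, by simp⟩
      exact ⟨(t - p.2, p.2), ht, rfl⟩
  · rintro ⟨⟨q, hqU, hq1⟩, ⟨r, hrU, hr2⟩⟩
    intro c hc ⟨tp, htp⟩
    have hsum := hc.2.2 tp
    have htpv : tp = p.1 + p.2 := by rw [htp] at hsum; linarith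
    subst htpv
    have hc1 : (c (p.1 + p.2)).1 = p.1 := by rw [htp]
    have hc2 : (c (p.1 + p.2)).2 = p.2 := by rw [htp]
    rcases le_total r.1 p.1 with ha | ha <;> rcases le_total q.2 p.2 with hb | hb
    · -- r.1 ≤ p.1, q.2 ≤ p.2 : IVT with curve left of q, right of r
      refine ivt_case hpath hc hrU hqU ?_ ?_
      · have h1 : r.1 + r.2 ≤ p.1 + p.2 := by rw [hr2]; linarith
        have h2 := hc.2.1 h1
        have h3 := hc.2.2 (r.1 + r.2)
        simp only at h2
        linarith
      · have h1 : q.1 + q.2 ≤ p.1 + p.2 := by rw [hq1]; linarith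
        have h2 := hc.1 h1
        simp only at h2
        linarith
    · -- r.1 ≤ p.1 ≤ q.1, p.2 ≤ q.2 : r ≤ p ≤ q, box
      refine ⟨p.1 + p.2, ?_⟩
      rw [htp]
      exact box_mem hcc hrU hqU ha (le_of_eq hq1.symm) (le_of_eq hr2) hb
    · -- p.1 ≤ r.1, q.2 ≤ p.2 : q ≤ p ≤ r, box
      refine ⟨p.1 + p.2, ?_⟩
      rw [htp]
      exact box_mem hcc hqU hrU (le_of_eq hq1) ha hb (le_of_eq hr2.symm)
    · -- p.1 ≤ r.1, p.2 ≤ q.2 : IVT with curve right of q, left of r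
      refine ivt_case hpath hc hqU hrU ?_ ?_
      · have h1 : p.1 + p.2 ≤ q.1 + q.2 := by rw [hq1]; linarith
        have h2 := hc.1 h1
        simp only at h2
        linarith
      · have h1 : p.1 + p.2 ≤ r.1 + r.2 := by rw [hr2]; linarith
        have h2 := hc.2.1 h1
        have h3 := hc.2.2 (r.1 + r.2)
        simp only at h2
        linarith

lemma prod_causallyConvex {A B : Set ℝ} (hA : Set.OrdConnected A) (hB : Set.OrdConnected B) :
    CausallyConvex (A ×ˢ B) := by
  intro c hc t₀ t₁ t h0 h1 hm0 hm1
  obtain ⟨hA0, hB0⟩ := hm0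
  obtain ⟨hA1, hB1⟩ := hm1
  constructor
  · exact hA.out hA0 hA1 ⟨hc.1 h0, hc.1 h1⟩
  · exact hB.out hB0 hB1 ⟨hc.2.1 h0, hc.2.1 h1⟩

/-- For a causally convex, connected, open subset `U ⊆ 𝕄`, the Cauchy
development is the double cone `D(U) = pr₊(U) × pr₋(U)`; moreover `D(U)` is causally
convex, connected and open, and `D(D(U)) = D(U)`. -/
theorem statement5 (U : Set (ℝ × ℝ)) (hopen : IsOpen U) (hconn : IsConnected U)
    (hcc : CausallyConvex U) :
    CauchyDev U = (Prod.fst '' U) ×ˢ (Prod.snd '' U) ∧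
    CausallyConvex (CauchyDev U) ∧
    IsConnected (CauchyDev U) ∧
    IsOpen (CauchyDev U) ∧
    CauchyDev (CauchyDev U) = CauchyDev U := by
  have hmain := cauchyDev_eq U hopen hconn hcc
  have hAconn : IsConnected (Prod.fst '' U) := hconn.image _ continuous_fst.continuousOn
  have hBconn : IsConnected (Prod.snd '' U) := hconn.image _ continuous_snd.continuousOn
  have hAord : Set.OrdConnected (Prod.fst '' U) := hAconn.isPreconnected.ordConnected
  have hBord : Set.OrdConnected (Prod.snd '' U) := hBconn.isPreconnected.ordConnected
  have hEcc : CausallyConvex (CauchyDev U) := by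
    rw [hmain]; exact prod_causallyConvex hAord hBord
  have hEconn : IsConnected (CauchyDev U) := by
    rw [hmain]; exact hAconn.prod hBconn
  have hEopen : IsOpen (CauchyDev U) := by
    rw [hmain]; exact (isOpenMap_fst U hopen).prod (isOpenMap_snd U hopen)
  refine ⟨hmain, hEcc, hEconn, hEopen, ?_⟩
  have h2 := cauchyDev_eq (CauchyDev U) hEopen hEconn hEcc
  rw [h2, hmain, Set.fst_image_prod _ (hBconn.nonempty),
    Set.snd_image_prod (hAconn.nonempty) _]
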